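/- Let c : ℝ → ℝ^d be a 2π-periodic immersion of class C² and let h : ℝ → ℝ be a 2π-periodic twice continuously differentiable function. Then ‖D_c h‖²_{L^∞} ≤ (ℓ_c/4)·‖D_c² h‖²_{L²(ds)}, where D_c² h = D_c(D_c h). -/

import Mathlib

open scoped Real
open MeasureTheory intervalIntegral

/-- A 2π-periodic immersion of class C²: `c` is C², 2π-periodic and has
nonvanishing derivative. -/
def ClosedImmersionC2 {d : ℕ} (c : ℝ → EuclideanSpace ℝ (Fin d)) : Prop :=
  ContDiff ℝ 2 c ∧ Function.Periodic c (2 * π) ∧ ∀ θ : ℝ, deriv c θ ≠ 0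

/-- The arc-length derivative `D_c h = h' / |c'|` of a scalar function. -/
noncomputable def arcDerivS {d : ℕ} (c : ℝ → EuclideanSpace ℝ (Fin d))
    (h : ℝ → ℝ) : ℝ → ℝ :=
  fun θ => deriv h θ / ‖deriv c θ‖

lemma cs_interval {u v : ℝ → ℝ} {a b : ℝ} (hab : a ≤ b)
    (hu : Continuous u) (hv : Continuous v) :
    (∫ t in a..b, u t * v t) ^ 2 ≤ (∫ t in a..b, u t ^ 2) * (∫ t in a..b, v t ^ 2) := by
  set U := ∫ t in a..b, u t ^ 2 with hU
  set V := ∫ t in a..b, v t ^ 2 with hV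
  set W := ∫ t in a..b, u t * v t with hW
  have iu : IntervalIntegrable (fun t => u t ^ 2) volume a b :=
    (hu.pow 2).intervalIntegrable _ _
  have iv : IntervalIntegrable (fun t => v t ^ 2) volume a b :=
    (hv.pow 2).intervalIntegrable _ _
  have iuv : IntervalIntegrable (fun t => u t * v t) volume a b :=
    (hu.mul hv).intervalIntegrable _ _
  have key : ∀ x : ℝ, 0 ≤ U * (x * x) + (2 * W) * x + V := by
    intro x
    have h1 : (∫ t in a..b, (x * u t + v t) ^ 2) = U * (x * x) + (2 * W) * x + V := by
      have he : ∀ t, (x * u t + v t) ^ 2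
          = (x * x) * u t ^ 2 + (2 * x) * (u t * v t) + v t ^ 2 := by intro t; ring
      simp_rw [he]
      rw [integral_add ((iu.const_mul _).add (iuv.const_mul _)) iv,
          integral_add (iu.const_mul _) (iuv.const_mul _),
          intervalIntegral.integral_const_mul, intervalIntegral.integral_const_mul]
      ring
    rw [← h1]
    exact intervalIntegral.integral_nonneg hab (fun t _ => sq_nonneg _)
  have hd := discrim_le_zero key
  rw [discrim] at hd
  nlinarith [hd]

lemma periodic_deriv' {f : ℝ → ℝ} {T : ℝ} (hf : Function.Periodic f T) :
    Function.Periodic (deriv f) T := by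
  intro x
  rw [← deriv_comp_add_const]
  congr 1
  funext y
  exact hf y

/-- `‖D_c h‖²_{L∞} ≤ (ℓ_c/4)·‖D_c² h‖²_{L²(ds)}`. -/
theorem stmt1 (d : ℕ) (hd : 1 ≤ d) (c : ℝ → EuclideanSpace ℝ (Fin d))
    (hc : ClosedImmersionC2 c)
    (h : ℝ → ℝ) (hh : ContDiff ℝ 2 h) (hhper : Function.Periodic h (2 * π)) :
    (⨆ θ : ℝ, |arcDerivS c h θ|) ^ 2 ≤
      (∫ θ in (0:ℝ)..(2 * π), ‖deriv c θ‖) / 4 *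
        (∫ θ in (0:ℝ)..(2 * π), (arcDerivS c (arcDerivS c h) θ) ^ 2 * ‖deriv c θ‖) := by
  obtain ⟨hcC2, hcper, hcne⟩ := hc
  set T : ℝ := 2 * π with hT
  have hTpos : 0 < T := by positivity
  set w : ℝ → ℝ := fun θ => ‖deriv c θ‖ with hw
  have hwpos : ∀ θ, 0 < w θ := fun θ => norm_pos_iff.mpr (hcne θ)
  have hwne : ∀ θ, w θ ≠ 0 := fun θ => (hwpos θ).ne'
  -- smoothness
  have hcC2' : ContDiff ℝ (1+1) c := by norm_num at hcC2 ⊢; exact hcC2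
  have hdcC1 : ContDiff ℝ 1 (deriv c) := (contDiff_succ_iff_deriv.mp hcC2').2.2
  have hwC1 : ContDiff ℝ 1 w := hdcC1.norm ℝ hcne
  have hwcont : Continuous w := hwC1.continuous
  have hhC2' : ContDiff ℝ (1+1) h := by norm_num at hh ⊢; exact hh
  have hdhC1 : ContDiff ℝ 1 (deriv h) := (contDiff_succ_iff_deriv.mp hhC2').2.2
  set f : ℝ → ℝ := arcDerivS c h with hf
  have hfC1 : ContDiff ℝ 1 f := hdhC1.div hwC1 hwne
  have hfdiff : Differentiable ℝ f := hfC1.differentiable one_ne_zero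
  have hfcont : Continuous f := hfC1.continuous
  have hf'cont : Continuous (deriv f) := (contDiff_one_iff_deriv.mp hfC1).2
  -- periodicity
  have hdcper : Function.Periodic (deriv c) T := by
    intro x; rw [← deriv_comp_add_const]; congr 1; funext y; exact hcper y
  have hwper : Function.Periodic w T := fun x => by simp only [hw, hdcper x]
  have hdhper : Function.Periodic (deriv h) T := periodic_deriv' hhper
  have hfper : Function.Periodic f T := by
    intro x
    show deriv h (x + T) / ‖deriv c (x + T)‖ = deriv h x / ‖deriv c x‖
    rw [hdhper x, hdcper x]
  have hf'per : Function.Periodic (deriv f) T := periodic_deriv' hfper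
  -- the second arc-length derivative
  have harc2 : ∀ θ, arcDerivS c f θ = deriv f θ / w θ := fun θ => rfl
  set g : ℝ → ℝ := fun θ => (deriv f θ) ^ 2 / w θ with hg
  have hgcont : Continuous g := (hf'cont.pow 2).div hwcont hwne
  have hgnonneg : ∀ θ, 0 ≤ g θ := fun θ => div_nonneg (sq_nonneg _) (hwpos θ).le
  have hgper : Function.Periodic g T := fun x => by
    simp only [hg, hf'per x, hwper x]
  -- A is the integral in the statement
  have hAeq : (∫ θ in (0:ℝ)..T, (arcDerivS c f θ) ^ 2 * w θ) = ∫ θ in (0:ℝ)..T, g θ := by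
    apply intervalIntegral.integral_congr
    intro θ _
    show (deriv f θ / w θ) ^ 2 * w θ = (deriv f θ) ^ 2 / w θ
    rw [div_pow, pow_two (w θ), ← div_div, div_mul_cancel₀ _ (hwne θ)]
  set L : ℝ := ∫ θ in (0:ℝ)..T, w θ with hL
  set A : ℝ := ∫ θ in (0:ℝ)..T, g θ with hA
  have hLnonneg : 0 ≤ L :=
    intervalIntegral.integral_nonneg hTpos.le (fun θ _ => (hwpos θ).le)
  have hAnonneg : 0 ≤ A :=
    intervalIntegral.integral_nonneg hTpos.le (fun θ _ => hgnonneg θ)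
  -- existence of a zero of f
  have hintf : ∫ θ in (0:ℝ)..T, f θ * w θ = 0 := by
    have he : ∀ θ, f θ * w θ = deriv h θ := by
      intro θ
      show (deriv h θ / w θ) * w θ = deriv h θ
      exact div_mul_cancel₀ _ (hwne θ)
    rw [intervalIntegral.integral_congr (fun θ _ => he θ)]
    rw [intervalIntegral.integral_deriv_eq_sub (fun x _ => (hhC2'.differentiable (by norm_num)) x)
      ((hdhC1.continuous).intervalIntegrable _ _)]
    have := hhper 0
    rw [zero_add] at this
    rw [this, sub_self]
  have hfw_int : IntervalIntegrable (fun θ => f θ * w θ) volume 0 T :=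
    (hfcont.mul hwcont).intervalIntegrable _ _
  obtain ⟨θ₀, hθ₀mem, hfθ₀⟩ : ∃ θ₀ ∈ Set.Icc (0:ℝ) T, f θ₀ = 0 := by
    by_contra hcon
    push_neg at hcon
    have hsign : (∀ θ ∈ Set.Icc (0:ℝ) T, 0 < f θ) ∨ (∀ θ ∈ Set.Icc (0:ℝ) T, f θ < 0) := by
      rcases (hcon 0 ⟨le_refl _, hTpos.le⟩).lt_or_gt with h0 | h0
      · right
        intro θ hθ
        rcases (hcon θ hθ).lt_or_gt with h1 | h1
        · exact h1
        · exfalso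
          have hiv := intermediate_value_Icc hθ.1 (hfcont.continuousOn (s := Set.Icc 0 θ))
          have h0mem : (0:ℝ) ∈ Set.Icc (f 0) (f θ) := ⟨h0.le, h1.le⟩
          obtain ⟨ζ, hζ, hfζ⟩ := hiv h0mem
          exact hcon ζ ⟨hζ.1, hζ.2.trans hθ.2⟩ hfζ
      · left
        intro θ hθ
        rcases (hcon θ hθ).lt_or_gt with h1 | h1
        · exfalso
          have hiv := intermediate_value_Icc' hθ.1 (hfcont.continuousOn (s := Set.Icc 0 θ))
          have h0mem : (0:ℝ) ∈ Set.Icc (f θ) (f 0) := ⟨h1.le, h0.le⟩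
          obtain ⟨ζ, hζ, hfζ⟩ := hiv h0mem
          exact hcon ζ ⟨hζ.1, hζ.2.trans hθ.2⟩ hfζ
        · exact h1
    rcases hsign with hpos | hneg
    · have : 0 < ∫ θ in (0:ℝ)..T, f θ * w θ :=
        intervalIntegral_pos_of_pos_on hfw_int
          (fun x hx => mul_pos (hpos x ⟨hx.1.le, hx.2.le⟩) (hwpos x)) hTpos
      rw [hintf] at this; exact lt_irrefl _ this
    · have : 0 < ∫ θ in (0:ℝ)..T, -(f θ * w θ) :=
        intervalIntegral_pos_of_pos_on hfw_int.neg
          (fun x hx => neg_pos.mpr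
            (mul_neg_of_neg_of_pos (hneg x ⟨hx.1.le, hx.2.le⟩) (hwpos x))) hTpos
      rw [intervalIntegral.integral_neg, hintf, neg_zero] at this
      exact lt_irrefl _ this
  -- Cauchy-Schwarz applied on subarcs
  have key : ∀ a b : ℝ, a ≤ b →
      (∫ t in a..b, deriv f t) ^ 2 ≤ (∫ t in a..b, g t) * (∫ t in a..b, w t) := by
    intro a b hab
    have hsq : ∀ t, Real.sqrt (w t) ≠ 0 := fun t =>
      ne_of_gt (Real.sqrt_pos.mpr (hwpos t))
    have hucont : Continuous (fun t => deriv f t / Real.sqrt (w t)) :=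
      hf'cont.div (hwcont.sqrt) hsq
    have hvcont : Continuous (fun t => Real.sqrt (w t)) := hwcont.sqrt
    have hcs := cs_interval hab hucont hvcont
    have h1 : (∫ t in a..b, (deriv f t / Real.sqrt (w t)) * Real.sqrt (w t))
        = ∫ t in a..b, deriv f t := by
      apply intervalIntegral.integral_congr
      intro t _
      exact div_mul_cancel₀ _ (hsq t)
    have h2 : (∫ t in a..b, (deriv f t / Real.sqrt (w t)) ^ 2) = ∫ t in a..b, g t := by
      apply intervalIntegral.integral_congr
      intro t _
      show (deriv f t / Real.sqrt (w t)) ^ 2 = (deriv f t) ^ 2 / w t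
      rw [div_pow, Real.sq_sqrt (hwpos t).le]
    have h3 : (∫ t in a..b, (Real.sqrt (w t)) ^ 2) = ∫ t in a..b, w t := by
      apply intervalIntegral.integral_congr
      intro t _
      exact Real.sq_sqrt (hwpos t).le
    rw [h1, h2, h3] at hcs
    exact hcs
  -- pointwise bound on [θ₀, θ₀ + T]
  have hfullL : (∫ θ in θ₀..θ₀+T, w θ) = L := by
    rw [hwper.intervalIntegral_add_eq θ₀ 0, zero_add]
  have hfullA : (∫ θ in θ₀..θ₀+T, g θ) = A := by
    rw [hgper.intervalIntegral_add_eq θ₀ 0, zero_add]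
  have hptwise : ∀ θ ∈ Set.Icc θ₀ (θ₀ + T), f θ ^ 2 ≤ L / 4 * A := by
    intro θ hθ
    have hW1 : (∫ t in θ₀..θ, deriv f t) = f θ := by
      rw [intervalIntegral.integral_deriv_eq_sub (fun x _ => hfdiff x)
        (hf'cont.intervalIntegrable _ _), hfθ₀, sub_zero]
    have hW2 : (∫ t in θ..θ₀+T, deriv f t) = - f θ := by
      rw [intervalIntegral.integral_deriv_eq_sub (fun x _ => hfdiff x)
        (hf'cont.intervalIntegrable _ _), hfper θ₀, hfθ₀, zero_sub]
    have h1 := key θ₀ θ hθ.1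
    have h2 := key θ (θ₀ + T) hθ.2
    rw [hW1] at h1
    rw [hW2, neg_pow] at h2
    simp only [neg_neg, one_mul, neg_one_sq] at h2
    set A1 := ∫ t in θ₀..θ, g t
    set A2 := ∫ t in θ..θ₀+T, g t
    set L1 := ∫ t in θ₀..θ, w t
    set L2 := ∫ t in θ..θ₀+T, w t
    have hA1 : 0 ≤ A1 := intervalIntegral.integral_nonneg hθ.1 (fun t _ => hgnonneg t)
    have hA2 : 0 ≤ A2 := intervalIntegral.integral_nonneg hθ.2 (fun t _ => hgnonneg t)
    have hL1 : 0 ≤ L1 := intervalIntegral.integral_nonneg hθ.1 (fun t _ => (hwpos t).le)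
    have hL2 : 0 ≤ L2 := intervalIntegral.integral_nonneg hθ.2 (fun t _ => (hwpos t).le)
    have hLsum : L1 + L2 = L := by
      rw [← hfullL]
      exact intervalIntegral.integral_add_adjacent_intervals
        (hwcont.intervalIntegrable _ _) (hwcont.intervalIntegrable _ _)
    have hAsum : A1 + A2 = A := by
      rw [← hfullA]
      exact intervalIntegral.integral_add_adjacent_intervals
        (hgcont.intervalIntegrable _ _) (hgcont.intervalIntegrable _ _)
    rw [← hLsum, ← hAsum]
    nlinarith [h1, h2, sq_nonneg (A1 * L2 - A2 * L1), sq_nonneg (f θ),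
      mul_nonneg hA1 hL2, mul_nonneg hA2 hL1, sq_nonneg (f θ ^ 2),
      mul_nonneg (mul_nonneg hA1 hL2) (mul_nonneg hA2 hL1)]
  -- all θ
  have hbound : ∀ θ : ℝ, f θ ^ 2 ≤ L / 4 * A := by
    intro θ
    obtain ⟨θ', hθ', heq⟩ := hfper.exists_mem_Ico hTpos θ θ₀
    rw [heq]
    exact hptwise θ' ⟨hθ'.1, hθ'.2.le⟩
  have hMnonneg : 0 ≤ L / 4 * A := by positivity
  have habs : ∀ θ : ℝ, |f θ| ≤ Real.sqrt (L / 4 * A) := by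
    intro θ
    rw [← Real.sqrt_sq_eq_abs]
    exact Real.sqrt_le_sqrt (hbound θ)
  have hsup : (⨆ θ : ℝ, |f θ|) ≤ Real.sqrt (L / 4 * A) := ciSup_le habs
  have hsup0 : 0 ≤ ⨆ θ : ℝ, |f θ| := Real.iSup_nonneg (fun θ => abs_nonneg _)
  calc (⨆ θ : ℝ, |f θ|) ^ 2 ≤ Real.sqrt (L / 4 * A) ^ 2 := by
        exact pow_le_pow_left₀ hsup0 hsup 2
    _ = L / 4 * A := Real.sq_sqrt hMnonneg
    _ = (∫ θ in (0:ℝ)..T, w θ) / 4 * (∫ θ in (0:ℝ)..T, (arcDerivS c f θ) ^ 2 * w θ) := by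
        rw [hAeq]
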